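/- Under the hypotheses of the slow-manifold solvability (α, β > 0, A > 0, B ≥ 0 with B > 0 if β < 1, power-law ψ, φ), the map (u_a*, u_b*) : ℝ₊² → ℝ₊² assigning to (ũ, ṽ) the unique nonnegative solution of u_a* + u_b* = ũ and q(u_a*, u_b*, ṽ) = 0 is continuously differentiable on (0,∞)², and its partial derivatives with respect to ũ satisfy ∂_ũ u_a*(ũ,ṽ) ∈ (0,1) and ∂_ũ u_b*(ũ,ṽ) ∈ (0,1). -/

import Mathlib

open Real

section SMAux

variable {α β A B a' b' c' d' : ℝ}

/-- The one-variable slice `x ↦ q(x, u - x, v)` is strictly decreasing on `[0, u]`. -/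
private lemma sm_strictAnti (hα : 0 < α) (hβ : 0 < β) (hA : 0 < A) (hB : 0 ≤ B)
    (ha' : 0 ≤ a') (hb' : 0 ≤ b') (hc' : 0 ≤ c') (hd' : 0 ≤ d')
    {u v : ℝ} (hu : 0 ≤ u) (hv : 0 ≤ v) :
    StrictAntiOn (fun x : ℝ => (B + (b' * (u - x) + d' * v)) ^ β * (u - x)
      - (A + (a' * x + c' * v)) ^ α * x) (Set.Icc 0 u) := by
  rintro x ⟨hx0, hxu⟩ y ⟨hy0, hyu⟩ hxy
  have hby : (0:ℝ) ≤ B + (b' * (u - y) + d' * v) := by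
    nlinarith [mul_nonneg hb' (sub_nonneg.2 hyu), mul_nonneg hd' hv]
  have h1 : (B + (b' * (u - y) + d' * v)) ^ β * (u - y)
      ≤ (B + (b' * (u - x) + d' * v)) ^ β * (u - x) := by
    refine mul_le_mul (Real.rpow_le_rpow hby (by nlinarith) hβ.le) (by linarith) (by linarith)
      (Real.rpow_nonneg (by nlinarith [mul_nonneg hb' (sub_nonneg.2 hxu), mul_nonneg hd' hv]) _)
  have hAx : (0:ℝ) < A + (a' * x + c' * v) := by
    nlinarith [mul_nonneg ha' hx0, mul_nonneg hc' hv]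
  have hAy : (0:ℝ) < A + (a' * y + c' * v) := by
    nlinarith [mul_nonneg ha' hy0, mul_nonneg hc' hv]
  have h2 : (A + (a' * x + c' * v)) ^ α * x < (A + (a' * y + c' * v)) ^ α * y :=
    calc (A + (a' * x + c' * v)) ^ α * x ≤ (A + (a' * y + c' * v)) ^ α * x :=
          mul_le_mul_of_nonneg_right (Real.rpow_le_rpow hAx.le (by nlinarith) hα.le) hx0
    _ < _ := mul_lt_mul_of_pos_left hxy (Real.rpow_pos_of_pos hAy α)
  simp only
  linarith

private lemma sm_cont (hα : 0 < α) (hβ : 0 < β) {u v : ℝ} :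
    Continuous (fun x : ℝ => (B + (b' * (u - x) + d' * v)) ^ β * (u - x)
      - (A + (a' * x + c' * v)) ^ α * x) := by
  have hβc : Continuous fun t : ℝ => t ^ β :=
    continuous_iff_continuousAt.2 fun t => Real.continuousAt_rpow_const t β (Or.inr hβ.le)
  have hαc : Continuous fun t : ℝ => t ^ α :=
    continuous_iff_continuousAt.2 fun t => Real.continuousAt_rpow_const t α (Or.inr hα.le)
  exact ((hβc.comp (by fun_prop)).mul (by fun_prop)).sub
    ((hαc.comp (by fun_prop)).mul (by fun_prop))

/-- Existence of a root in `[0, u]`. -/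
private lemma sm_exists (hα : 0 < α) (hβ : 0 < β) (hA : 0 < A) (hB : 0 ≤ B)
    (ha' : 0 ≤ a') (hb' : 0 ≤ b') (hc' : 0 ≤ c') (hd' : 0 ≤ d')
    {u v : ℝ} (hu : 0 ≤ u) (hv : 0 ≤ v) :
    ∃ x ∈ Set.Icc 0 u, (B + (b' * (u - x) + d' * v)) ^ β * (u - x)
      - (A + (a' * x + c' * v)) ^ α * x = 0 := by
  set g := fun x : ℝ => (B + (b' * (u - x) + d' * v)) ^ β * (u - x)
      - (A + (a' * x + c' * v)) ^ α * x with hg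
  have hgu : g u ≤ 0 := by
    have : g u = -( (A + (a' * u + c' * v)) ^ α * u) := by simp [hg, sub_self]
    rw [this, neg_nonpos]
    exact mul_nonneg (Real.rpow_nonneg (by nlinarith [mul_nonneg ha' hu, mul_nonneg hc' hv]) _) hu
  have hg0 : 0 ≤ g 0 := by
    have : g 0 = (B + (b' * (u - 0) + d' * v)) ^ β * (u - 0) := by simp [hg]
    rw [this]
    exact mul_nonneg (Real.rpow_nonneg
      (by nlinarith [mul_nonneg hb' (by linarith : (0:ℝ) ≤ u - 0), mul_nonneg hd' hv]) _)
      (by linarith)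
  have := intermediate_value_Icc' hu ((sm_cont (A := A) (B := B) (a' := a') (b' := b')
    (c' := c') (d' := d') hα hβ (u := u) (v := v)).continuousOn)
  obtain ⟨x, hx, hgx⟩ := this ⟨hgu, hg0⟩
  exact ⟨x, hx, hgx⟩

/-- Derivative of the slice `t ↦ q(t, u - t, v)` in the first variable. -/
private lemma sm_derivX {u v x : ℝ} (hα : 0 < α) (hβ : 0 < β)
    (hs : 0 < B + (b' * (u - x) + d' * v)) (ht : 0 < A + (a' * x + c' * v)) :
    HasDerivAt (fun t : ℝ => (B + (b' * (u - t) + d' * v)) ^ β * (u - t)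
        - (A + (a' * t + c' * v)) ^ α * t)
      (-(b' * β * (B + (b' * (u - x) + d' * v)) ^ (β - 1) * (u - x)
          + (B + (b' * (u - x) + d' * v)) ^ β)
        - (a' * α * (A + (a' * x + c' * v)) ^ (α - 1) * x + (A + (a' * x + c' * v)) ^ α)) x := by
  have h1 : HasDerivAt (fun t : ℝ => u - t) (-1) x := by
    simpa using (hasDerivAt_id x).const_sub u
  have hs_in : HasDerivAt (fun t : ℝ => B + (b' * (u - t) + d' * v)) (-b') x := by
    have := ((h1.const_mul b').add_const (d' * v)).const_add B
    convert this using 1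
    iterate 2 rfl
    ring
  have hspow := hs_in.rpow_const (p := β) (Or.inl hs.ne')
  have hterm1 := hspow.mul h1
  have ht_in : HasDerivAt (fun t : ℝ => A + (a' * t + c' * v)) a' x := by
    have := (((hasDerivAt_id x).const_mul a').add_const (c' * v)).const_add A
    convert this using 1
    iterate 3 rfl
    ring
  have htpow := ht_in.rpow_const (p := α) (Or.inl ht.ne')
  have hterm2 := htpow.mul (hasDerivAt_id x)
  have h := hterm1.sub hterm2
  convert h using 1
  iterate 3 rfl
  simp only [id_eq]
  ring

/-- Derivative of the slice `t ↦ q(x, t - x, v)` in the second variable. -/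
private lemma sm_derivU {u v x : ℝ} (hα : 0 < α) (hβ : 0 < β)
    (hs : 0 < B + (b' * (u - x) + d' * v)) :
    HasDerivAt (fun t : ℝ => (B + (b' * (t - x) + d' * v)) ^ β * (t - x)
        - (A + (a' * x + c' * v)) ^ α * x)
      (b' * β * (B + (b' * (u - x) + d' * v)) ^ (β - 1) * (u - x)
        + (B + (b' * (u - x) + d' * v)) ^ β) u := by
  have h1 : HasDerivAt (fun t : ℝ => t - x) (1:ℝ) u := (hasDerivAt_id u).sub_const x
  have hs_in : HasDerivAt (fun t : ℝ => B + (b' * (t - x) + d' * v)) b' u := by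
    have := ((h1.const_mul b').add_const (d' * v)).const_add B
    convert this using 1
    iterate 2 rfl
    ring
  have hspow := hs_in.rpow_const (p := β) (Or.inl hs.ne')
  have h := (hspow.mul h1).sub_const ((A + (a' * x + c' * v)) ^ α * x)
  convert h using 1
  iterate 3 rfl
  ring

end SMAux

/-- A continuous linear equivalence of `ℝ × ℝ × ℝ` of the form `w ↦ (L w, w.2)`. -/
private noncomputable def smEquiv (L : ℝ × ℝ × ℝ →L[ℝ] ℝ) (c : ℝ) (hc : c ≠ 0)
    (hcL : L (1, 0, 0) = c) : (ℝ × ℝ × ℝ) ≃L[ℝ] ℝ × ℝ × ℝ :=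
  LinearEquiv.toContinuousLinearEquiv
  { toFun := fun w => (L w, w.2)
    map_add' := fun w₁ w₂ => by simp [Prod.ext_iff]
    map_smul' := fun r w => by simp [Prod.ext_iff]
    invFun := fun y => ((y.1 - L (0, y.2)) / c, y.2)
    left_inv := fun w => by
      refine Prod.ext ?_ rfl
      have h : w - ((0 : ℝ), w.2) = w.1 • ((1:ℝ), (0:ℝ), (0:ℝ)) := by
        simp [Prod.ext_iff]
      show (L w - L (0, w.2)) / c = w.1
      rw [← map_sub, h, map_smul, smul_eq_mul, hcL, mul_div_cancel_right₀ _ hc]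
    right_inv := fun y => by
      refine Prod.ext ?_ rfl
      show L ((y.1 - L (0, y.2)) / c, y.2) = y.1
      have h : (((y.1 - L (0, y.2)) / c : ℝ), y.2)
          = ((y.1 - L (0, y.2)) / c) • ((1:ℝ), (0:ℝ), (0:ℝ)) + ((0:ℝ), y.2) := by
        simp [Prod.ext_iff]
      rw [h, map_add, map_smul, smul_eq_mul, hcL]
      field_simp
      ring }

private lemma smEquiv_apply (L : ℝ × ℝ × ℝ →L[ℝ] ℝ) (c : ℝ) (hc : c ≠ 0)
    (hcL : L (1, 0, 0) = c) (w : ℝ × ℝ × ℝ) :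
    smEquiv L c hc hcL w = (L w, w.2) := rfl
set_option maxHeartbeats 1600000 in
theorem slow_manifold_regularity (α β A B a' b' c' d' : ℝ)
    (hα : 0 < α) (hβ : 0 < β) (hA : 0 < A) (hB : 0 ≤ B) (hBβ : β < 1 → 0 < B)
    (ha' : 0 ≤ a') (hb' : 0 ≤ b') (hc' : 0 ≤ c') (hd' : 0 ≤ d')
    (hac : (a', c') ≠ (0, 0)) (hbd : (b', d') ≠ (0, 0))
    (q : ℝ → ℝ → ℝ → ℝ)
    (hq : ∀ u_a u_b v, q u_a u_b v =
      (B + (b' * u_b + d' * v)) ^ β * u_b - (A + (a' * u_a + c' * v)) ^ α * u_a) :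
    ∃ ua' ub' : ℝ × ℝ → ℝ,
      -- (ua*, ub*) is the unique nonnegative solution of the slow-manifold system
      (∀ p : ℝ × ℝ, 0 ≤ p.1 → 0 ≤ p.2 →
        0 ≤ ua' p ∧ 0 ≤ ub' p ∧ ua' p + ub' p = p.1 ∧ q (ua' p) (ub' p) p.2 = 0 ∧
        ∀ x y : ℝ, 0 ≤ x → 0 ≤ y → x + y = p.1 → q x y p.2 = 0 →
          x = ua' p ∧ y = ub' p) ∧
      -- continuous differentiability on (0,∞)²
      ContDiffOn ℝ 1 ua' (Set.Ioi 0 ×ˢ Set.Ioi 0) ∧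
      ContDiffOn ℝ 1 ub' (Set.Ioi 0 ×ˢ Set.Ioi 0) ∧
      -- the partial derivatives in ũ lie in (0,1)
      (∀ u v : ℝ, 0 < u → 0 < v →
        deriv (fun t => ua' (t, v)) u ∈ Set.Ioo (0 : ℝ) 1 ∧
        deriv (fun t => ub' (t, v)) u ∈ Set.Ioo (0 : ℝ) 1) := by
  classical
  set Φ : ℝ × ℝ × ℝ → ℝ := fun w =>
    (B + (b' * (w.2.1 - w.1) + d' * w.2.2)) ^ β * (w.2.1 - w.1)
      - (A + (a' * w.1 + c' * w.2.2)) ^ α * w.1 with hΦdef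
  have Φapp : ∀ x u v : ℝ, Φ (x, u, v) = (B + (b' * (u - x) + d' * v)) ^ β * (u - x)
      - (A + (a' * x + c' * v)) ^ α * x := fun x u v => by rw [hΦdef]
  set ua : ℝ × ℝ → ℝ := fun p =>
    if h : ∃ x ∈ Set.Icc 0 p.1, Φ (x, p.1, p.2) = 0 then h.choose else 0 with huadef
  have key : ∀ p : ℝ × ℝ, 0 ≤ p.1 → 0 ≤ p.2 →
      ua p ∈ Set.Icc 0 p.1 ∧ Φ (ua p, p.1, p.2) = 0 := by
    intro p hp1 hp2
    have hex : ∃ x ∈ Set.Icc 0 p.1, Φ (x, p.1, p.2) = 0 := by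
      obtain ⟨x, hx, hx2⟩ := sm_exists hα hβ hA hB ha' hb' hc' hd' hp1 hp2
      exact ⟨x, hx, by rw [Φapp]; exact hx2⟩
    have : ua p = hex.choose := by simp only [huadef]; rw [dif_pos hex]
    rw [this]
    exact hex.choose_spec
  have uniq : ∀ p : ℝ × ℝ, 0 ≤ p.1 → 0 ≤ p.2 → ∀ x, x ∈ Set.Icc 0 p.1 →
      Φ (x, p.1, p.2) = 0 → x = ua p := by
    intro p hp1 hp2 x hx hΦx
    have hSA := sm_strictAnti hα hβ hA hB ha' hb' hc' hd' hp1 hp2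
    refine hSA.injOn hx (key p hp1 hp2).1 ?_
    show (B + (b' * (p.1 - x) + d' * p.2)) ^ β * (p.1 - x)
        - (A + (a' * x + c' * p.2)) ^ α * x = _
    rw [← Φapp, ← Φapp]
    exact hΦx.trans (key p hp1 hp2).2.symm
  -- the master local regularity statement
  have master : ∀ u0 v0 : ℝ, 0 < u0 → 0 < v0 →
      ContDiffAt ℝ 1 ua (u0, v0) ∧
        deriv (fun t => ua (t, v0)) u0 ∈ Set.Ioo (0 : ℝ) 1 := by
    intro u0 v0 hu0 hv0
    obtain ⟨⟨hx00, hx0u'⟩, hroot0'⟩ := key (u0, v0) hu0.le hv0.le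
    set x0 := ua (u0, v0) with hx0def
    have hx0u : x0 ≤ u0 := hx0u'
    have hroot0 : Φ (x0, u0, v0) = 0 := hroot0'
    have hbdpos : ∀ y : ℝ, 0 < y → 0 < b' * y + d' * v0 := by
      intro y hy
      rcases eq_or_lt_of_le hb' with h | h
      · have hd0 : d' ≠ 0 := by
          intro hd0'
          exact hbd (by rw [← h, hd0'])
        have hd0' : 0 < d' := lt_of_le_of_ne hd' (Ne.symm hd0)
        nlinarith
      · nlinarith [mul_nonneg hd' hv0.le]
    have hxu : x0 < u0 := by
      rcases lt_or_eq_of_le hx0u with h | h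
      · exact h
      · exfalso
        have h2 := hroot0
        rw [h] at h2
        rw [Φapp] at h2
        have h4 : (0:ℝ) < (A + (a' * u0 + c' * v0)) ^ α * u0 :=
          mul_pos (Real.rpow_pos_of_pos
            (by nlinarith [mul_nonneg ha' hu0.le, mul_nonneg hc' hv0.le]) _) hu0
        rw [sub_self] at h2
        simp only [mul_zero, zero_sub, neg_eq_zero] at h2
        linarith
    have hx0pos : 0 < x0 := by
      rcases lt_or_eq_of_le hx00 with h | h
      · exact h
      · exfalso
        have h2 := hroot0
        rw [← h] at h2
        rw [Φapp] at h2
        have h5 : 0 < B + (b' * (u0 - 0) + d' * v0) := by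
          have := hbdpos (u0 - 0) (by linarith)
          linarith
        have h4 : 0 < (B + (b' * (u0 - 0) + d' * v0)) ^ β * (u0 - 0) :=
          mul_pos (Real.rpow_pos_of_pos h5 _) (by linarith)
        simp only [mul_zero] at h2
        linarith
    have hs0 : 0 < B + (b' * (u0 - x0) + d' * v0) := by
      have := hbdpos (u0 - x0) (by linarith)
      linarith
    have ht0 : 0 < A + (a' * x0 + c' * v0) := by
      nlinarith [mul_nonneg ha' hx00, mul_nonneg hc' hv0.le]
    -- Φ is C¹ at (x0, u0, v0)
    have hΦc : ContDiffAt ℝ 1 Φ (x0, u0, v0) := by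
      rw [hΦdef]
      have h1 : ContDiffAt ℝ 1 (fun w : ℝ×ℝ×ℝ => B + (b' * (w.2.1 - w.1) + d' * w.2.2))
          ((x0, u0, v0) : ℝ×ℝ×ℝ) := by fun_prop
      have h2 : ContDiffAt ℝ 1 (fun w : ℝ×ℝ×ℝ => A + (a' * w.1 + c' * w.2.2))
          ((x0, u0, v0) : ℝ×ℝ×ℝ) := by fun_prop
      exact ((h1.rpow_const_of_ne hs0.ne').mul (by fun_prop)).sub
        ((h2.rpow_const_of_ne ht0.ne').mul (by fun_prop))
    have hL : HasFDerivAt Φ (fderiv ℝ Φ (x0, u0, v0)) (x0, u0, v0) :=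
      (hΦc.differentiableAt one_ne_zero).hasFDerivAt
    set L := fderiv ℝ Φ (x0, u0, v0) with hLdef
    -- partial derivatives of Φ
    have hcurve1 : HasDerivAt (fun t : ℝ => ((t, u0, v0) : ℝ×ℝ×ℝ))
        (((1:ℝ), (0:ℝ), (0:ℝ)) : ℝ×ℝ×ℝ) x0 :=
      (hasDerivAt_id x0).prodMk ((hasDerivAt_const x0 u0).prodMk (hasDerivAt_const x0 v0))
    have hid1 : HasDerivAt (fun t : ℝ => Φ (t, u0, v0)) (L (1, 0, 0)) x0 :=
      by have := hL.comp_hasDerivAt x0 hcurve1; exact this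
    have hslice1 : HasDerivAt (fun t : ℝ => Φ (t, u0, v0))
        (-(b' * β * (B + (b' * (u0 - x0) + d' * v0)) ^ (β - 1) * (u0 - x0)
            + (B + (b' * (u0 - x0) + d' * v0)) ^ β)
          - (a' * α * (A + (a' * x0 + c' * v0)) ^ (α - 1) * x0
            + (A + (a' * x0 + c' * v0)) ^ α)) x0 :=
      (sm_derivX hα hβ hs0 ht0).congr_of_eventuallyEq
        (Filter.Eventually.of_forall fun t => Φapp t u0 v0)
    have hcurve2 : HasDerivAt (fun t : ℝ => ((x0, t, v0) : ℝ×ℝ×ℝ))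
        (((0:ℝ), (1:ℝ), (0:ℝ)) : ℝ×ℝ×ℝ) u0 :=
      (hasDerivAt_const u0 x0).prodMk ((hasDerivAt_id u0).prodMk (hasDerivAt_const u0 v0))
    have hid2 : HasDerivAt (fun t : ℝ => Φ (x0, t, v0)) (L (0, 1, 0)) u0 :=
      by have := hL.comp_hasDerivAt u0 hcurve2; exact this
    have hslice2 : HasDerivAt (fun t : ℝ => Φ (x0, t, v0))
        (b' * β * (B + (b' * (u0 - x0) + d' * v0)) ^ (β - 1) * (u0 - x0)
          + (B + (b' * (u0 - x0) + d' * v0)) ^ β) u0 :=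
      (sm_derivU hα hβ hs0).congr_of_eventuallyEq
        (Filter.Eventually.of_forall fun t => Φapp x0 t v0)
    have hAx := hid1.unique hslice1
    have hAu := hid2.unique hslice2
    have hb1 : 0 ≤ b' * β * (B + (b' * (u0 - x0) + d' * v0)) ^ (β - 1) * (u0 - x0) :=
      mul_nonneg (mul_nonneg (mul_nonneg hb' hβ.le) (Real.rpow_nonneg hs0.le _)) (by linarith)
    have hb2 : (0:ℝ) < (B + (b' * (u0 - x0) + d' * v0)) ^ β := Real.rpow_pos_of_pos hs0 β
    have ha1 : 0 ≤ a' * α * (A + (a' * x0 + c' * v0)) ^ (α - 1) * x0 :=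
      mul_nonneg (mul_nonneg (mul_nonneg ha' hα.le) (Real.rpow_nonneg ht0.le _)) hx00
    have ha2 : (0:ℝ) < (A + (a' * x0 + c' * v0)) ^ α := Real.rpow_pos_of_pos ht0 α
    have hDXneg : L (1, 0, 0) < 0 := by rw [hAx]; linarith
    have hDUpos : 0 < L (0, 1, 0) := by rw [hAu]; linarith
    have hsum : L (0, 1, 0) + L (1, 0, 0) < 0 := by rw [hAx, hAu]; linarith
    -- the local inverse
    set e := smEquiv L (L (1, 0, 0)) hDXneg.ne rfl with hedef
    set Ψ : ℝ×ℝ×ℝ → ℝ×ℝ×ℝ := fun w => (Φ w, w.2) with hΨdef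
    have hΨ' : HasFDerivAt Ψ (e : ℝ×ℝ×ℝ →L[ℝ] ℝ×ℝ×ℝ) (x0, u0, v0) := by
      have hcoe : (e : ℝ×ℝ×ℝ →L[ℝ] ℝ×ℝ×ℝ)
          = L.prod (ContinuousLinearMap.snd ℝ ℝ (ℝ×ℝ)) := by
        refine ContinuousLinearMap.ext fun w => ?_
        rfl
      rw [hΨdef, hcoe]
      exact hL.prodMk (ContinuousLinearMap.snd ℝ ℝ (ℝ×ℝ)).hasFDerivAt
    have hΨc : ContDiffAt ℝ 1 Ψ (x0, u0, v0) := by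
      rw [hΨdef]
      exact hΦc.prodMk contDiff_snd.contDiffAt
    set g := hΨc.localInverse hΨ' one_ne_zero with hgdef
    have hstrict := hΨc.hasStrictFDerivAt' hΨ' one_ne_zero
    have hgright : ∀ᶠ y in nhds (Ψ (x0, u0, v0)), Ψ (g y) = y :=
      hstrict.eventually_right_inverse
    have hgc : ContDiffAt ℝ 1 g (Ψ (x0, u0, v0)) := hΨc.to_localInverse hΨ' one_ne_zero
    have hgp : g (Ψ (x0, u0, v0)) = (x0, u0, v0) :=
      hΨc.localInverse_apply_image hΨ' one_ne_zero
    have hΨp : Ψ (x0, u0, v0) = ((0:ℝ), u0, v0) := by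
      rw [hΨdef]
      simp only
      rw [hroot0]
    -- local identification of ua with the inverse
    have hjc : ContDiffAt ℝ 1 (fun p : ℝ×ℝ => (((0:ℝ), p.1, p.2) : ℝ×ℝ×ℝ)) (u0, v0) := by
      fun_prop
    have hgc' : ContDiffAt ℝ 1 g ((0:ℝ), u0, v0) := by rw [← hΨp]; exact hgc
    have hGc : ContDiffAt ℝ 1 (fun p : ℝ×ℝ => g ((0:ℝ), p.1, p.2)) (u0, v0) :=
      hgc'.comp (u0, v0) hjc
    have hG0 : g ((0:ℝ), u0, v0) = (x0, u0, v0) := by rw [← hΨp]; exact hgp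
    have hjt : Filter.Tendsto (fun p : ℝ×ℝ => (((0:ℝ), p.1, p.2) : ℝ×ℝ×ℝ))
        (nhds (u0, v0)) (nhds ((0:ℝ), u0, v0)) := hjc.continuousAt
    have hev1 : ∀ᶠ p : ℝ×ℝ in nhds (u0, v0),
        Ψ (g ((0:ℝ), p.1, p.2)) = ((0:ℝ), p.1, p.2) := by
      have h := hgright
      rw [hΨp] at h
      exact hjt.eventually h
    have hGt : Filter.Tendsto (fun p : ℝ×ℝ => g ((0:ℝ), p.1, p.2))
        (nhds (u0, v0)) (nhds (x0, u0, v0)) := by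
      have h : ContinuousAt (fun p : ℝ×ℝ => g ((0:ℝ), p.1, p.2)) (u0, v0) := hGc.continuousAt
      unfold ContinuousAt at h
      have h2 : (fun p : ℝ×ℝ => g (((0:ℝ), p.1, p.2) : ℝ×ℝ×ℝ)) (u0, v0)
          = ((x0, u0, v0) : ℝ×ℝ×ℝ) := hG0
      rwa [h2] at h
    have hopen : ∀ᶠ w : ℝ×ℝ×ℝ in nhds ((x0, u0, v0) : ℝ×ℝ×ℝ), 0 < w.1 ∧ w.1 < w.2.1 := by
      have hO : IsOpen {w : ℝ×ℝ×ℝ | 0 < w.1 ∧ w.1 < w.2.1} :=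
        (isOpen_lt continuous_const continuous_fst).inter
          (isOpen_lt continuous_fst (continuous_fst.comp continuous_snd))
      exact hO.mem_nhds ⟨hx0pos, hxu⟩
    have hev2 := hGt.eventually hopen
    have hopen2 : ∀ᶠ p : ℝ×ℝ in nhds ((u0, v0) : ℝ×ℝ), 0 < p.1 ∧ 0 < p.2 := by
      have hO : IsOpen {p : ℝ×ℝ | 0 < p.1 ∧ 0 < p.2} :=
        (isOpen_lt continuous_const continuous_fst).inter
          (isOpen_lt continuous_const continuous_snd)
      exact hO.mem_nhds ⟨hu0, hv0⟩
    have hloc : ∀ᶠ p : ℝ×ℝ in nhds (u0, v0), ua p = (g ((0:ℝ), p.1, p.2)).1 := by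
      filter_upwards [hev1, hev2, hopen2] with p h1 h2 h3
      have hsnd : (g ((0:ℝ), p.1, p.2)).2 = (p.1, p.2) := by
        have := congrArg Prod.snd h1
        simpa [hΨdef] using this
      have hfst : Φ (g ((0:ℝ), p.1, p.2)) = 0 := by
        have := congrArg Prod.fst h1
        simpa [hΨdef] using this
      have hrepr : g ((0:ℝ), p.1, p.2) = ((g ((0:ℝ), p.1, p.2)).1, p.1, p.2) := by
        refine Prod.ext rfl ?_
        rw [hsnd]
      have hΦ0 : Φ ((g ((0:ℝ), p.1, p.2)).1, p.1, p.2) = 0 := by rw [← hrepr]; exact hfst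
      have hmem : (g ((0:ℝ), p.1, p.2)).1 ∈ Set.Icc 0 p.1 := by
        constructor
        · exact h2.1.le
        · have h21 := h2.2
          have : (g ((0:ℝ), p.1, p.2)).2.1 = p.1 := by rw [hsnd]
          linarith [this ▸ h21]
      exact (uniq p h3.1.le h3.2.le _ hmem hΦ0).symm
    have hua_cd : ContDiffAt ℝ 1 ua (u0, v0) := by
      have hfst : ContDiffAt ℝ 1 (fun p : ℝ×ℝ => (g ((0:ℝ), p.1, p.2)).1) (u0, v0) :=
        contDiff_fst.contDiffAt.comp (u0, v0) hGc
      exact hfst.congr_of_eventuallyEq hloc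
    refine ⟨hua_cd, ?_⟩
    have hlinec : ContDiffAt ℝ 1 (fun t : ℝ => ((t, v0) : ℝ×ℝ)) u0 := by fun_prop
    have hlt : Filter.Tendsto (fun t : ℝ => ((t, v0) : ℝ×ℝ)) (nhds u0) (nhds (u0, v0)) :=
      hlinec.continuousAt
    have hsl_cd : ContDiffAt ℝ 1 (fun t : ℝ => ua (t, v0)) u0 := by
      have := hua_cd.comp u0 hlinec; exact this
    have hk : HasDerivAt (fun t : ℝ => ua (t, v0)) (deriv (fun t : ℝ => ua (t, v0)) u0) u0 :=
      (hsl_cd.differentiableAt one_ne_zero).hasDerivAt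
    set k := deriv (fun t : ℝ => ua (t, v0)) u0 with hkdef
    have hΦ0' : ∀ᶠ t in nhds u0, Φ (ua (t, v0), t, v0) = 0 := by
      have h1 := hlt.eventually hloc
      have h2 := hlt.eventually hev1
      filter_upwards [h1, h2] with t ht1 ht2
      have hsnd : (g ((0:ℝ), t, v0)).2 = (t, v0) := by
        have := congrArg Prod.snd ht2
        simpa [hΨdef] using this
      have hfst : Φ (g ((0:ℝ), t, v0)) = 0 := by
        have := congrArg Prod.fst ht2
        simpa [hΨdef] using this
      have hrepr : g ((0:ℝ), t, v0) = ((ua (t, v0), t, v0) : ℝ×ℝ×ℝ) := by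
        refine Prod.ext ?_ hsnd
        exact ht1.symm
      rw [← hrepr]
      exact hfst
    have hcurve : HasDerivAt (fun t : ℝ => ((ua (t, v0), t, v0) : ℝ×ℝ×ℝ))
        ((k, 1, 0) : ℝ×ℝ×ℝ) u0 :=
      hk.prodMk ((hasDerivAt_id u0).prodMk (hasDerivAt_const u0 v0))
    have hcomp : HasDerivAt (fun t : ℝ => Φ (ua (t, v0), t, v0)) (L ((k, 1, 0) : ℝ×ℝ×ℝ)) u0 :=
      by have := hL.comp_hasDerivAt u0 hcurve; exact this
    have hzero : HasDerivAt (fun t : ℝ => Φ (ua (t, v0), t, v0)) 0 u0 :=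
      (hasDerivAt_const u0 (0:ℝ)).congr_of_eventuallyEq hΦ0'
    have hkey : L ((k, 1, 0) : ℝ×ℝ×ℝ) = 0 := hcomp.unique hzero
    have hdecomp : ((k, 1, 0) : ℝ×ℝ×ℝ)
        = k • (((1:ℝ), (0:ℝ), (0:ℝ)) : ℝ×ℝ×ℝ) + ((0:ℝ), (1:ℝ), (0:ℝ)) := by
      simp [Prod.ext_iff]
    rw [hdecomp, map_add, map_smul, smul_eq_mul] at hkey
    constructor
    · by_contra hcon
      push_neg at hcon
      nlinarith [mul_nonneg (neg_nonneg.2 hcon) (neg_nonneg.2 hDXneg.le)]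
    · by_contra hcon
      push_neg at hcon
      nlinarith [mul_nonneg (by linarith : (0:ℝ) ≤ k - 1) (neg_nonneg.2 hDXneg.le)]
  -- assemble
  refine ⟨ua, fun p => p.1 - ua p, ?_, ?_, ?_, ?_⟩
  · intro p hp1 hp2
    simp only
    obtain ⟨⟨h0, h1⟩, hroot⟩ := key p hp1 hp2
    refine ⟨h0, by linarith, by ring, ?_, ?_⟩
    · rw [hq, ← Φapp]
      exact hroot
    · intro x y hx hy hxy hqxy
      have hy' : y = p.1 - x := by linarith
      subst hy'
      rw [hq] at hqxy
      have hx' : x = ua p := by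
        refine uniq p hp1 hp2 x ⟨hx, by linarith⟩ ?_
        rw [Φapp]
        exact hqxy
      exact ⟨hx', by rw [hx']⟩
  · intro p hp
    exact ((master p.1 p.2 hp.1 hp.2).1).contDiffWithinAt
  · intro p hp
    exact (contDiff_fst.contDiffAt.contDiffWithinAt).sub
      ((master p.1 p.2 hp.1 hp.2).1).contDiffWithinAt
  · intro u v hu hv
    have h := master u v hu hv
    refine ⟨h.2, ?_⟩
    have hlinec : ContDiffAt ℝ 1 (fun t : ℝ => ((t, v) : ℝ×ℝ)) u := by fun_prop
    have hsl := ((h.1.comp u hlinec).differentiableAt one_ne_zero).hasDerivAt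
    have hub : HasDerivAt (fun t : ℝ => t - ua (t, v))
        (1 - deriv (fun t : ℝ => ua (t, v)) u) u :=
      (hasDerivAt_id u).sub hsl
    have hd : deriv (fun t : ℝ => t - ua (t, v)) u
        = 1 - deriv (fun t : ℝ => ua (t, v)) u := hub.deriv
    show deriv (fun t : ℝ => t - ua (t, v)) u ∈ Set.Ioo (0:ℝ) 1
    rw [hd]
    obtain ⟨hk1, hk2⟩ := h.2
    exact ⟨by linarith, by linarith⟩
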